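/- Stability under coloring: let w0 be an infinite word over alphabet A and w1 an infinite word over alphabet B with A and B disjoint, let a ∈ A, and let w = color(w0, a, w1) be obtained from w0 by replacing the n-th occurrence of the letter a by the n-th letter of w1. If for some k ≥ 1 every two k-binomially equivalent factors of w0 are equal and every two k-binomially equivalent factors of w1 are equal, then every two k-binomially equivalent factors of w are equal. -/

import Mathlib

/-- Number of occurrences of `x` as a scattered subword of `w`. -/
def binom {α : Type*} [DecidableEq α] (w x : List α) : ℕ := w.sublists.count x

/-- `k`-binomial equivalence of finite words. -/
def KBinEquiv {α : Type*} [DecidableEq α] (k : ℕ) (u v : List α) : Prop :=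
  ∀ x : List α, x.length ≤ k → binom u x = binom v x

/-- `u` is a factor (finite contiguous subword) of the infinite word `w`. -/
def Factor {α : Type*} (w : ℕ → α) (u : List α) : Prop :=
  ∃ s : ℕ, u = (List.range u.length).map (fun t => w (s + t))

/-- The coloring of the letter `a` in `w₀` by `w₁`: the `m`-th occurrence of `a`
in `w₀` is replaced by the `m`-th letter of `w₁`.  The disjoint union of the two
alphabets is modelled by the sum type `α ⊕ β`. -/
def color {α β : Type*} [DecidableEq α] (w₀ : ℕ → α) (a : α) (w₁ : ℕ → β) : ℕ → α ⊕ β :=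
  fun n =>
    if w₀ n = a then
      Sum.inr (w₁ (((Finset.range (n + 1)).filter (fun m => w₀ m = a)).card - 1))
    else
      Sum.inl (w₀ n)

section Aux

variable {α : Type*} {β : Type*} {γ : Type*}

lemma count_as_countP {δ : Type*} [BEq δ] [LawfulBEq δ] [DecidableEq δ] (y : δ) (S : List δ) :
    S.count y = S.countP (fun z => decide (z = y)) := by
  rw [List.count_eq_countP]
  refine List.countP_congr fun z _ => ?_
  simp

lemma binom_sublists' [DecidableEq α] (u x : List α) : binom u x = u.sublists'.count x := by
  unfold binom
  rw [count_as_countP, count_as_countP]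
  exact (List.sublists_perm_sublists' u).countP_eq _

lemma binom_nil [DecidableEq α] (x : List α) :
    binom ([] : List α) x = if x = [] then 1 else 0 := by
  cases x <;> simp [binom]

lemma binom_cons [DecidableEq α] (c : α) (l x : List α) :
    binom (c :: l) x = binom l x +
      (match x with
       | [] => 0
       | d :: t => if d = c then binom l t else 0) := by
  rw [binom_sublists', binom_sublists', List.sublists'_cons, List.count_append,
    ← binom_sublists']
  congr 1
  cases x with
  | nil =>
    show List.count [] (List.map (List.cons c) l.sublists') = 0
    rw [List.count_eq_zero]
    simp
  | cons d t =>
    show List.count (d :: t) (List.map (List.cons c) l.sublists')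
      = if d = c then binom l t else 0
    by_cases hd : d = c
    · subst hd
      rw [if_pos rfl, binom_sublists', count_as_countP, count_as_countP, List.countP_map]
      refine List.countP_congr fun z _ => ?_
      simp
    · rw [if_neg hd, List.count_eq_zero]
      intro hmem
      obtain ⟨y, _, hy⟩ := List.mem_map.1 hmem
      exact hd (by injection hy with h1 h2; exact h1.symm)

lemma binom_map [DecidableEq α] [DecidableEq γ] (f : α → γ) (u : List α) (x : List γ) :
    binom (u.map f) x = u.sublists.countP (fun y => y.map f == x) := by
  rw [binom, List.sublists_map, List.count, List.countP_map]
  rfl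

lemma countP_eq_of_count_eq [DecidableEq α] {k : ℕ} (S T : List (List α))
    (h : ∀ y : List α, y.length ≤ k → S.count y = T.count y)
    (p : List α → Bool) (hp : ∀ y, p y → y.length ≤ k) :
    S.countP p = T.countP p := by
  have hf : (S : Multiset (List α)).filter (fun y => p y) =
      (T : Multiset (List α)).filter (fun y => p y) := by
    ext y
    rw [Multiset.count_filter, Multiset.count_filter]
    by_cases hy : p y
    · have := h y (hp y hy)
      rw [count_as_countP, count_as_countP] at this
      have hS : Multiset.count y (↑S : Multiset (List α))
          = S.countP (fun z => decide (z = y)) := by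
        rw [Multiset.coe_count]; exact @count_as_countP (List α) instBEqOfDecidableEq _ _ y S
      have hT : Multiset.count y (↑T : Multiset (List α))
          = T.countP (fun z => decide (z = y)) := by
        rw [Multiset.coe_count]; exact @count_as_countP (List α) instBEqOfDecidableEq _ _ y T
      rw [if_pos hy, if_pos hy, hS, hT, this]
    · simp [hy]
  have := congrArg Multiset.card hf
  simpa [List.countP_eq_length_filter] using this

lemma kbin_map [DecidableEq α] [DecidableEq γ] {k : ℕ} {u v : List α} (f : α → γ)
    (h : KBinEquiv k u v) : KBinEquiv k (u.map f) (v.map f) := by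
  intro x hx
  rw [binom_map, binom_map]
  refine countP_eq_of_count_eq u.sublists v.sublists (fun y hy => h y hy) _ ?_
  intro y hy
  have : y.map f = x := by simpa using hy
  calc y.length = x.length := by rw [← this, List.length_map]
    _ ≤ k := hx

lemma binom_filterMap [DecidableEq α] [DecidableEq β] (l : List (α ⊕ β)) (x : List β) :
    binom (l.filterMap Sum.getRight?) x = binom l (x.map Sum.inr) := by
  induction l generalizing x with
  | nil => cases x <;> simp [binom_nil]
  | cons c l ih =>
    cases c with
    | inl a' =>
      have h1 : (Sum.inl a' :: l).filterMap Sum.getRight? = l.filterMap Sum.getRight? := by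
        simp [List.filterMap_cons, Sum.getRight?]
      rw [h1, ih, binom_cons]
      cases x with
      | nil => simp
      | cons d t => simp
    | inr b =>
      have h1 : (Sum.inr b :: l).filterMap Sum.getRight? = b :: l.filterMap Sum.getRight? := by
        simp [List.filterMap_cons, Sum.getRight?]
      rw [h1, binom_cons, binom_cons, ih]
      cases x with
      | nil => simp
      | cons d t =>
        simp only [List.map_cons]
        by_cases hd : d = b
        · subst hd; simp [ih]
        · have : ¬ (Sum.inr d : α ⊕ β) = Sum.inr b := by simp [hd]
          simp [hd, this]

lemma kbin_filterMap [DecidableEq α] [DecidableEq β] {k : ℕ} {u v : List (α ⊕ β)}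
    (h : KBinEquiv k u v) :
    KBinEquiv k (u.filterMap Sum.getRight?) (v.filterMap Sum.getRight?) := by
  intro x hx
  rw [binom_filterMap, binom_filterMap]
  exact h _ (by simpa using hx)

lemma reconstruct {a : α} :
    ∀ u v : List (α ⊕ β), (∀ x ∈ u, x ≠ Sum.inl a) → (∀ x ∈ v, x ≠ Sum.inl a) →
      u.map (Sum.elim id (fun _ => a)) = v.map (Sum.elim id (fun _ => a)) →
      u.filterMap Sum.getRight? = v.filterMap Sum.getRight? → u = v := by
  intro u
  induction u with
  | nil =>
    intro v _ _ hσ _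
    cases v with
    | nil => rfl
    | cons d v' => simp at hσ
  | cons c u' ih =>
    intro v hu hv hσ hπ
    cases v with
    | nil => simp at hσ
    | cons d v' =>
      simp only [List.map_cons, List.cons.injEq] at hσ
      obtain ⟨hσ1, hσ2⟩ := hσ
      have hu' : ∀ x ∈ u', x ≠ Sum.inl a := fun x hx => hu x (List.mem_cons_of_mem _ hx)
      have hv' : ∀ x ∈ v', x ≠ Sum.inl a := fun x hx => hv x (List.mem_cons_of_mem _ hx)
      cases c with
      | inl ca =>
        cases d with
        | inl da =>
          simp only [Sum.elim_inl, id] at hσ1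
          subst hσ1
          have hπ' : u'.filterMap Sum.getRight? = v'.filterMap Sum.getRight? := by
            simpa [List.filterMap_cons, Sum.getRight?] using hπ
          rw [ih v' hu' hv' hσ2 hπ']
        | inr db =>
          exfalso
          simp only [Sum.elim_inl, Sum.elim_inr, id] at hσ1
          exact hu (Sum.inl ca) List.mem_cons_self (by rw [hσ1])
      | inr cb =>
        cases d with
        | inl da =>
          exfalso
          simp only [Sum.elim_inl, Sum.elim_inr, id] at hσ1
          exact hv (Sum.inl da) List.mem_cons_self (by rw [← hσ1])
        | inr db =>
          have hπ2 : cb :: u'.filterMap Sum.getRight? = db :: v'.filterMap Sum.getRight? := by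
            simpa [List.filterMap_cons, Sum.getRight?] using hπ
          injection hπ2 with h1 h2
          subst h1
          rw [ih v' hu' hv' hσ2 h2]

end Aux

section Color

variable {α : Type*} {β : Type*} [DecidableEq α] [DecidableEq β]
variable (w₀ : ℕ → α) (w₁ : ℕ → β) (a : α)
set_option linter.unusedSectionVars false

/-- number of occurrences of `a` in `w₀` before position `m` -/
def cnt (m : ℕ) : ℕ := ((Finset.range m).filter (fun j => w₀ j = a)).card

lemma cnt_mono {m n : ℕ} (h : m ≤ n) : cnt w₀ a m ≤ cnt w₀ a n :=
  Finset.card_le_card (Finset.filter_subset_filter _ (Finset.range_subset_range.2 h))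

lemma cnt_succ (m : ℕ) :
    cnt w₀ a (m + 1) = cnt w₀ a m + (if w₀ m = a then 1 else 0) := by
  unfold cnt
  rw [Finset.range_add_one, Finset.filter_insert]
  by_cases h : w₀ m = a
  · rw [if_pos h, if_pos h, Finset.card_insert_of_notMem (by simp)]
  · rw [if_neg h, if_neg h, Nat.add_zero]

lemma color_eq (n : ℕ) (h : w₀ n = a) :
    color w₀ a w₁ n = Sum.inr (w₁ (cnt w₀ a n)) := by
  unfold color
  rw [if_pos h]
  congr 1
  have : cnt w₀ a (n + 1) = cnt w₀ a n + 1 := by rw [cnt_succ, if_pos h]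
  show w₁ (cnt w₀ a (n + 1) - 1) = _
  rw [this]
  simp

lemma color_ne (n : ℕ) (h : ¬ w₀ n = a) :
    color w₀ a w₁ n = Sum.inl (w₀ n) := by
  unfold color; rw [if_neg h]

lemma sigma_color (n : ℕ) :
    Sum.elim id (fun _ => a) (color w₀ a w₁ n) = w₀ n := by
  by_cases h : w₀ n = a
  · rw [color_eq w₀ w₁ a n h]; simpa using h.symm
  · rw [color_ne w₀ w₁ a n h]; rfl

lemma color_ne_inl_a (n : ℕ) : color w₀ a w₁ n ≠ Sum.inl a := by
  by_cases h : w₀ n = a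
  · rw [color_eq w₀ w₁ a n h]; simp
  · rw [color_ne w₀ w₁ a n h]; simpa using h

lemma filterMap_segment (s n : ℕ) :
    ((List.range n).map (fun t => color w₀ a w₁ (s + t))).filterMap Sum.getRight?
      = (List.range (cnt w₀ a (s + n) - cnt w₀ a s)).map (fun t => w₁ (cnt w₀ a s + t)) := by
  induction n with
  | zero => simp
  | succ n ih =>
    rw [List.range_succ, List.map_append, List.filterMap_append, ih]
    by_cases h : w₀ (s + n) = a
    · have hc : cnt w₀ a (s + (n + 1)) = cnt w₀ a (s + n) + 1 := by
        rw [← Nat.add_assoc, cnt_succ, if_pos h]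
      have hle : cnt w₀ a s ≤ cnt w₀ a (s + n) := cnt_mono w₀ a (Nat.le_add_right s n)
      have hD : cnt w₀ a (s + (n + 1)) - cnt w₀ a s
          = (cnt w₀ a (s + n) - cnt w₀ a s) + 1 := by omega
      rw [hD, List.range_succ, List.map_append]
      congr 1
      rw [List.map_singleton, List.map_singleton, color_eq w₀ w₁ a (s + n) h]
      simp only [List.filterMap_cons, List.filterMap_nil, Sum.getRight?]
      congr 2
      omega
    · have hc : cnt w₀ a (s + (n + 1)) = cnt w₀ a (s + n) := by
        rw [← Nat.add_assoc, cnt_succ, if_neg h, Nat.add_zero]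
      rw [hc, List.map_singleton, color_ne w₀ w₁ a (s + n) h]
      simp [List.filterMap_cons, Sum.getRight?]

lemma factor_sigma {u : List (α ⊕ β)} (h : Factor (color w₀ a w₁) u) :
    Factor w₀ (u.map (Sum.elim id (fun _ => a))) := by
  obtain ⟨s, hs⟩ := h
  refine ⟨s, ?_⟩
  rw [List.length_map, hs, List.map_map, List.length_map, List.length_range]
  exact List.map_congr_left (fun t _ => sigma_color w₀ w₁ a (s + t))

lemma factor_pi {u : List (α ⊕ β)} (h : Factor (color w₀ a w₁) u) :
    Factor w₁ (u.filterMap Sum.getRight?) := by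
  obtain ⟨s, hs⟩ := h
  refine ⟨cnt w₀ a s, ?_⟩
  have key : u.filterMap Sum.getRight?
      = (List.range (cnt w₀ a (s + u.length) - cnt w₀ a s)).map
          (fun t => w₁ (cnt w₀ a s + t)) := by
    conv_lhs => rw [hs]
    exact filterMap_segment w₀ w₁ a s u.length
  rw [key, List.length_map, List.length_range]

end Color

theorem stmt_19 {α β : Type*} [DecidableEq α] [DecidableEq β]
    (w₀ : ℕ → α) (w₁ : ℕ → β) (a : α) (k : ℕ) (hk : 1 ≤ k)
    (h₀ : ∀ u v : List α, Factor w₀ u → Factor w₀ v → KBinEquiv k u v → u = v)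
    (h₁ : ∀ u v : List β, Factor w₁ u → Factor w₁ v → KBinEquiv k u v → u = v) :
    ∀ u v : List (α ⊕ β), Factor (color w₀ a w₁) u → Factor (color w₀ a w₁) v →
      KBinEquiv k u v → u = v := by
  intro u v hu hv he
  have hσ : u.map (Sum.elim id (fun _ => a)) = v.map (Sum.elim id (fun _ => a)) :=
    h₀ _ _ (factor_sigma w₀ w₁ a hu) (factor_sigma w₀ w₁ a hv) (kbin_map _ he)
  have hπ : u.filterMap Sum.getRight? = v.filterMap Sum.getRight? :=
    h₁ _ _ (factor_pi w₀ w₁ a hu) (factor_pi w₀ w₁ a hv) (kbin_filterMap he)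
  have hnu : ∀ x ∈ u, x ≠ Sum.inl a := by
    obtain ⟨s, hs⟩ := hu
    intro x hx
    rw [hs] at hx
    obtain ⟨t, _, ht⟩ := List.mem_map.1 hx
    rw [← ht]
    exact color_ne_inl_a w₀ w₁ a (s + t)
  have hnv : ∀ x ∈ v, x ≠ Sum.inl a := by
    obtain ⟨s, hs⟩ := hv
    intro x hx
    rw [hs] at hx
    obtain ⟨t, _, ht⟩ := List.mem_map.1 hx
    rw [← ht]
    exact color_ne_inl_a w₀ w₁ a (s + t)
  exact reconstruct u v hnu hnv hσ hπ
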